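/- Let h ∈ (1,2), let ψ : [0,1] → [0,∞) be measurable and integrable, and set χ(s) = ∫_s^1 ψ(u) du. Then ∫_0^1 ∫_0^1 χ(s₁) χ(s₂) (s₁ + s₂)^{h−2} ds₁ ds₂ = (h(h−1))^{−1} ∫_0^1 ∫_0^1 ψ(u₁) ψ(u₂) [ (u₁ + u₂)^h − u₁^h − u₂^h ] du₁ du₂. -/

import Mathlib

open MeasureTheory intervalIntegral Set

lemma stmt10_fubini_aux (φ ψ : ℝ → ℝ) (K : ℝ → ℝ → ℝ)
    (hφ : Measurable φ) (C : ℝ) (hφb : ∀ s ∈ Ioc (0:ℝ) 1, |φ s| ≤ C)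
    (hψ : Measurable ψ) (hψi : IntegrableOn ψ (Ioc (0:ℝ) 1))
    (hK : Measurable (Function.uncurry K)) (M : ℝ)
    (hKb : ∀ s ∈ Ioc (0:ℝ) 1, ∀ u ∈ Ioc (0:ℝ) 1, |K s u| ≤ M) :
    (∫ s in Ioc (0:ℝ) 1, φ s * ∫ u in Ioc (0:ℝ) 1, ψ u * K s u)
      = ∫ u in Ioc (0:ℝ) 1, ψ u * ∫ s in Ioc (0:ℝ) 1, φ s * K s u := by
  set μ : Measure ℝ := volume.restrict (Ioc (0:ℝ) 1) with hμ
  have hint : Integrable (Function.uncurry fun s u => φ s * (ψ u * K s u)) (μ.prod μ) := by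
    refine Integrable.mono' (g := fun p : ℝ × ℝ => C * M * |ψ p.2|) ?_ ?_ ?_
    · have h1 : Integrable (fun _ : ℝ => C * M) μ := by
        refine integrableOn_const ?_
        simp [Real.volume_Ioc]
      simpa [mul_assoc] using h1.mul_prod hψi.abs
    · exact ((hφ.comp measurable_fst).mul
        ((hψ.comp measurable_snd).mul hK)).aestronglyMeasurable
    · rw [hμ, Measure.prod_restrict]
      filter_upwards [ae_restrict_mem (measurableSet_Ioc.prod measurableSet_Ioc)] with p hp
      obtain ⟨hp1, hp2⟩ := hp
      have h1 := hφb p.1 hp1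
      have h2 := hKb p.1 hp1 p.2 hp2
      have h3 : (0:ℝ) ≤ C := le_trans (abs_nonneg _) h1
      calc ‖φ p.1 * (ψ p.2 * K p.1 p.2)‖ = |φ p.1| * (|ψ p.2| * |K p.1 p.2|) := by
            simp [abs_mul]
        _ ≤ C * (|ψ p.2| * M) := by
            apply mul_le_mul h1 (mul_le_mul_of_nonneg_left h2 (abs_nonneg _))
              (by positivity) h3
        _ = C * M * |ψ p.2| := by ring
  calc (∫ s in Ioc (0:ℝ) 1, φ s * ∫ u in Ioc (0:ℝ) 1, ψ u * K s u)
      = ∫ s, (∫ u, φ s * (ψ u * K s u) ∂μ) ∂μ := by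
        simp_rw [MeasureTheory.integral_const_mul]
        rfl
    _ = ∫ u, (∫ s, φ s * (ψ u * K s u) ∂μ) ∂μ := integral_integral_swap hint
    _ = ∫ u in Ioc (0:ℝ) 1, ψ u * ∫ s in Ioc (0:ℝ) 1, φ s * K s u := by
        refine integral_congr_ae (Filter.Eventually.of_forall fun u => ?_)
        simp_rw [mul_left_comm _ (ψ u), MeasureTheory.integral_const_mul]
        rfl

lemma stmt10_comp1 (h a u : ℝ) (h1 : 1 < h) (h2 : h < 2) :
    ∫ s in (0:ℝ)..u, (a + s) ^ (h - 2) = ((a + u) ^ (h - 1) - a ^ (h - 1)) / (h - 1) := by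
  have hr : (-1:ℝ) < h - 2 := by linarith
  rw [intervalIntegral.integral_comp_add_left (fun x => x ^ (h - 2)) a,
    integral_rpow (Or.inl hr)]
  rw [show h - 2 + 1 = h - 1 by ring, add_zero]

lemma stmt10_comp2 (h u₂ u₁ : ℝ) (h1 : 1 < h) :
    ∫ s in (0:ℝ)..u₁, ((s + u₂) ^ (h - 1) - s ^ (h - 1)) / (h - 1)
      = ((u₁ + u₂) ^ h - u₂ ^ h - u₁ ^ h) / ((h - 1) * h) := by
  have hc1 : Continuous fun s : ℝ => (s + u₂) ^ (h - 1) :=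
    (Real.continuous_rpow_const (by linarith)).comp (continuous_id.add continuous_const)
  have hc2 : Continuous fun s : ℝ => s ^ (h - 1) := Real.continuous_rpow_const (by linarith)
  have hr : (-1:ℝ) < h - 1 := by linarith
  rw [intervalIntegral.integral_div,
    intervalIntegral.integral_sub (hc1.intervalIntegrable _ _) (hc2.intervalIntegrable _ _),
    intervalIntegral.integral_comp_add_right (fun x => x ^ (h - 1)) u₂,
    integral_rpow (Or.inl hr), integral_rpow (Or.inl hr),
    show h - 1 + 1 = h by ring, zero_add,
    Real.zero_rpow (by linarith : h ≠ 0)]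
  rw [sub_zero, div_sub_div_same, div_div, mul_comm h (h - 1)]

theorem stmt10 (h : ℝ) (hh : h ∈ Set.Ioo (1:ℝ) 2)
    (ψ : ℝ → ℝ) (hψmeas : Measurable ψ) (hψ0 : ∀ u, 0 ≤ ψ u)
    (hψint : IntegrableOn ψ (Set.Icc 0 1))
    (χ : ℝ → ℝ) (hχ : ∀ s, χ s = ∫ u in s..(1:ℝ), ψ u) :
    ∫ s₁ in (0:ℝ)..1, ∫ s₂ in (0:ℝ)..1, χ s₁ * χ s₂ * (s₁ + s₂) ^ (h - 2) =
      (h * (h - 1))⁻¹ *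
        ∫ u₁ in (0:ℝ)..1, ∫ u₂ in (0:ℝ)..1,
          ψ u₁ * ψ u₂ * ((u₁ + u₂) ^ h - u₁ ^ h - u₂ ^ h) := by
  obtain ⟨h1, h2⟩ := hh
  have hψi : IntegrableOn ψ (Ioc (0:ℝ) 1) := hψint.mono_set Ioc_subset_Icc_self
  set χ' : ℝ → ℝ := fun s => ∫ u in Ioc (0:ℝ) 1 ∩ Ioi s, ψ u with hχ'def
  have hanti : Antitone χ' := by
    intro s t hst
    exact setIntegral_mono_set (hψi.mono_set inter_subset_left)
      (Filter.Eventually.of_forall fun u => hψ0 u)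
      (HasSubset.Subset.eventuallyLE (inter_subset_inter_right _ (Ioi_subset_Ioi hst)))
  have hχ'm : Measurable χ' := hanti.measurable
  have hIs : ∀ s ∈ Ioc (0:ℝ) 1, Ioc (0:ℝ) 1 ∩ Ioi s = Ioc s 1 := by
    intro s hs; ext x
    simp only [mem_inter_iff, mem_Ioc, mem_Ioi]
    constructor
    · rintro ⟨⟨_, hx1⟩, hx2⟩; exact ⟨hx2, hx1⟩
    · rintro ⟨hx2, hx1⟩; exact ⟨⟨hs.1.trans hx2, hx1⟩, hx2⟩
  have hχeq : ∀ s ∈ Ioc (0:ℝ) 1, χ s = χ' s := by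
    intro s hs
    rw [hχ s, intervalIntegral.integral_of_le hs.2, ← hIs s hs, hχ'def]
  set Cb : ℝ := ∫ u in Ioc (0:ℝ) 1, |ψ u| with hCb
  have hχ'b : ∀ s ∈ Ioc (0:ℝ) 1, |χ' s| ≤ Cb := by
    intro s hs
    calc |χ' s| ≤ ∫ u in Ioc (0:ℝ) 1 ∩ Ioi s, |ψ u| := by
          have hb := norm_integral_le_integral_norm
            (μ := volume.restrict (Ioc (0:ℝ) 1 ∩ Ioi s)) ψ
          simp only [Real.norm_eq_abs] at hb
          exact hb
      _ ≤ Cb := setIntegral_mono_set hψi.abs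
          (Filter.Eventually.of_forall fun u => abs_nonneg _)
          (HasSubset.Subset.eventuallyLE inter_subset_left)
  -- kernels
  have hindm : Measurable (Function.uncurry fun s u : ℝ => if s < u then (1:ℝ) else 0) :=
    Measurable.ite (measurableSet_lt measurable_fst measurable_snd)
      measurable_const measurable_const
  have hindb : ∀ s ∈ Ioc (0:ℝ) 1, ∀ u ∈ Ioc (0:ℝ) 1,
      |if s < u then (1:ℝ) else 0| ≤ 1 := by
    intro s _ u _; split_ifs <;> simp
  have hind1 : ∀ s : ℝ, (∫ u in Ioc (0:ℝ) 1, ψ u * (if s < u then 1 else 0)) = χ' s := by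
    intro s
    have he : (fun u => ψ u * (if s < u then (1:ℝ) else 0)) = (Ioi s).indicator ψ := by
      ext u; simp [indicator_apply, mem_Ioi, mul_ite]
    rw [he, setIntegral_indicator measurableSet_Ioi]
  have hind2 : ∀ g : ℝ → ℝ, ∀ u ∈ Ioc (0:ℝ) 1,
      (∫ s in Ioc (0:ℝ) 1, g s * (if s < u then 1 else 0)) = ∫ s in (0:ℝ)..u, g s := by
    intro g u hu
    have he : (fun s => g s * (if s < u then (1:ℝ) else 0)) = (Iio u).indicator g := by
      ext s; simp [indicator_apply, mem_Iio, mul_ite]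
    rw [he, setIntegral_indicator measurableSet_Iio]
    have he2 : Ioc (0:ℝ) 1 ∩ Iio u = Ioo 0 u := by
      ext x
      simp only [mem_inter_iff, mem_Ioc, mem_Ioo, mem_Iio]
      constructor
      · rintro ⟨⟨hx0, _⟩, hxu⟩; exact ⟨hx0, hxu⟩
      · rintro ⟨hx0, hxu⟩; exact ⟨⟨hx0, hxu.le.trans hu.2⟩, hxu⟩
    rw [he2, ← integral_Ioc_eq_integral_Ioo, ← intervalIntegral.integral_of_le hu.1.le]
  have hk₁m : Measurable (Function.uncurry fun s u : ℝ =>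
      ((s + u) ^ (h - 1) - s ^ (h - 1)) / (h - 1)) := by
    exact (((measurable_fst.add measurable_snd).pow measurable_const).sub
      (measurable_fst.pow measurable_const)).div_const _
  set M₁ : ℝ := ((2:ℝ) ^ (h - 1) + 1) / (h - 1) with hM₁
  have hk₁b : ∀ s ∈ Ioc (0:ℝ) 1, ∀ u ∈ Ioc (0:ℝ) 1,
      |((s + u) ^ (h - 1) - s ^ (h - 1)) / (h - 1)| ≤ M₁ := by
    intro s hs u hu
    have hb1 : (s + u) ^ (h - 1) ≤ (2:ℝ) ^ (h - 1) :=
      Real.rpow_le_rpow (by linarith [hs.1, hu.1]) (by linarith [hs.2, hu.2]) (by linarith)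
    have hb2 : s ^ (h - 1) ≤ 1 := Real.rpow_le_one hs.1.le hs.2 (by linarith)
    have hn1 : (0:ℝ) ≤ (s + u) ^ (h - 1) := Real.rpow_nonneg (by linarith [hs.1, hu.1]) _
    have hn2 : (0:ℝ) ≤ s ^ (h - 1) := Real.rpow_nonneg hs.1.le _
    have h2n : (0:ℝ) ≤ (2:ℝ) ^ (h - 1) := Real.rpow_nonneg (by norm_num) _
    rw [abs_div, abs_of_pos (by linarith : (0:ℝ) < h - 1), hM₁]
    gcongr
    · exact abs_le.2 ⟨by linarith, by linarith⟩
  -- Step E1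
  have E1 : ∀ s₁ ∈ Ioc (0:ℝ) 1,
      (∫ s in Ioc (0:ℝ) 1, χ s * (s₁ + s) ^ (h - 2))
        = ∫ u in Ioc (0:ℝ) 1, ψ u * (((s₁ + u) ^ (h - 1) - s₁ ^ (h - 1)) / (h - 1)) := by
    intro s₁ hs₁
    have hφm : Measurable fun s : ℝ => (s₁ + s) ^ (h - 2) :=
      (measurable_const.add measurable_id).pow measurable_const
    have hφb : ∀ s ∈ Ioc (0:ℝ) 1, |(s₁ + s) ^ (h - 2)| ≤ s₁ ^ (h - 2) := by
      intro s hs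
      rw [abs_of_nonneg (Real.rpow_nonneg (by linarith [hs₁.1, hs.1]) _)]
      exact Real.rpow_le_rpow_of_nonpos hs₁.1 (by linarith [hs.1]) (by linarith)
    have key := stmt10_fubini_aux (fun s => (s₁ + s) ^ (h - 2)) ψ
      (fun s u => if s < u then 1 else 0) hφm _ hφb hψmeas hψi hindm 1 hindb
    calc (∫ s in Ioc (0:ℝ) 1, χ s * (s₁ + s) ^ (h - 2))
        = ∫ s in Ioc (0:ℝ) 1, (s₁ + s) ^ (h - 2)
            * ∫ u in Ioc (0:ℝ) 1, ψ u * (if s < u then 1 else 0) := by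
          refine setIntegral_congr_fun measurableSet_Ioc fun s hs => ?_
          rw [hind1 s, ← hχeq s hs, mul_comm]
      _ = ∫ u in Ioc (0:ℝ) 1, ψ u
            * ∫ s in Ioc (0:ℝ) 1, (s₁ + s) ^ (h - 2) * (if s < u then 1 else 0) := key
      _ = ∫ u in Ioc (0:ℝ) 1, ψ u * (((s₁ + u) ^ (h - 1) - s₁ ^ (h - 1)) / (h - 1)) := by
          refine setIntegral_congr_fun measurableSet_Ioc fun u hu => ?_
          rw [hind2 _ u hu, stmt10_comp1 h s₁ u h1 h2]
  -- Step E3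
  have E3 : ∀ u₂ ∈ Ioc (0:ℝ) 1,
      (∫ s in Ioc (0:ℝ) 1, χ' s * (((s + u₂) ^ (h - 1) - s ^ (h - 1)) / (h - 1)))
        = ∫ u₁ in Ioc (0:ℝ) 1,
            ψ u₁ * (((u₁ + u₂) ^ h - u₂ ^ h - u₁ ^ h) / ((h - 1) * h)) := by
    intro u₂ hu₂
    have hφm : Measurable fun s : ℝ => ((s + u₂) ^ (h - 1) - s ^ (h - 1)) / (h - 1) :=
      (((measurable_id.add_const u₂).pow measurable_const).sub
        (measurable_id.pow measurable_const)).div_const _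
    have hφb : ∀ s ∈ Ioc (0:ℝ) 1,
        |((s + u₂) ^ (h - 1) - s ^ (h - 1)) / (h - 1)| ≤ M₁ :=
      fun s hs => hk₁b s hs u₂ hu₂
    have key := stmt10_fubini_aux
      (fun s => ((s + u₂) ^ (h - 1) - s ^ (h - 1)) / (h - 1)) ψ
      (fun s u => if s < u then 1 else 0) hφm _ hφb hψmeas hψi hindm 1 hindb
    calc (∫ s in Ioc (0:ℝ) 1, χ' s * (((s + u₂) ^ (h - 1) - s ^ (h - 1)) / (h - 1)))
        = ∫ s in Ioc (0:ℝ) 1, (((s + u₂) ^ (h - 1) - s ^ (h - 1)) / (h - 1))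
            * ∫ u in Ioc (0:ℝ) 1, ψ u * (if s < u then 1 else 0) := by
          refine setIntegral_congr_fun measurableSet_Ioc fun s hs => ?_
          rw [hind1 s, mul_comm]
      _ = ∫ u₁ in Ioc (0:ℝ) 1, ψ u₁ * ∫ s in Ioc (0:ℝ) 1,
            (((s + u₂) ^ (h - 1) - s ^ (h - 1)) / (h - 1)) * (if s < u₁ then 1 else 0) := key
      _ = ∫ u₁ in Ioc (0:ℝ) 1,
            ψ u₁ * (((u₁ + u₂) ^ h - u₂ ^ h - u₁ ^ h) / ((h - 1) * h)) := by
          refine setIntegral_congr_fun measurableSet_Ioc fun u₁ hu₁ => ?_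
          rw [hind2 _ u₁ hu₁, stmt10_comp2 h u₂ u₁ h1]
  -- main chain
  rw [intervalIntegral.integral_of_le (zero_le_one : (0:ℝ) ≤ 1),
    intervalIntegral.integral_of_le (zero_le_one : (0:ℝ) ≤ 1)]
  simp_rw [intervalIntegral.integral_of_le (zero_le_one : (0:ℝ) ≤ 1)]
  calc (∫ s₁ in Ioc (0:ℝ) 1, ∫ s₂ in Ioc (0:ℝ) 1, χ s₁ * χ s₂ * (s₁ + s₂) ^ (h - 2))
      = ∫ s₁ in Ioc (0:ℝ) 1, χ' s₁ * ∫ u₂ in Ioc (0:ℝ) 1,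
          ψ u₂ * (((s₁ + u₂) ^ (h - 1) - s₁ ^ (h - 1)) / (h - 1)) := by
        refine setIntegral_congr_fun measurableSet_Ioc fun s₁ hs₁ => ?_
        rw [← E1 s₁ hs₁, ← hχeq s₁ hs₁]
        simp_rw [mul_assoc]
        exact MeasureTheory.integral_const_mul _ _
    _ = ∫ u₂ in Ioc (0:ℝ) 1, ψ u₂ * ∫ s₁ in Ioc (0:ℝ) 1,
          χ' s₁ * (((s₁ + u₂) ^ (h - 1) - s₁ ^ (h - 1)) / (h - 1)) :=
        stmt10_fubini_aux χ' ψ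
          (fun s u => ((s + u) ^ (h - 1) - s ^ (h - 1)) / (h - 1))
          hχ'm Cb hχ'b hψmeas hψi hk₁m M₁ hk₁b
    _ = ∫ u₂ in Ioc (0:ℝ) 1, ψ u₂ * ∫ u₁ in Ioc (0:ℝ) 1,
          ψ u₁ * (((u₁ + u₂) ^ h - u₂ ^ h - u₁ ^ h) / ((h - 1) * h)) := by
        refine setIntegral_congr_fun measurableSet_Ioc fun u₂ hu₂ => ?_
        rw [E3 u₂ hu₂]
    _ = (h * (h - 1))⁻¹ * ∫ u₁ in Ioc (0:ℝ) 1, ∫ u₂ in Ioc (0:ℝ) 1,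
          ψ u₁ * ψ u₂ * ((u₁ + u₂) ^ h - u₁ ^ h - u₂ ^ h) := by
        rw [← MeasureTheory.integral_const_mul]
        refine integral_congr_ae (Filter.Eventually.of_forall fun a => ?_)
        dsimp only
        rw [← MeasureTheory.integral_const_mul, ← MeasureTheory.integral_const_mul]
        refine integral_congr_ae (Filter.Eventually.of_forall fun b => ?_)
        dsimp only
        rw [add_comm b a]
        ring
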